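/- Let K be a positive integer and G = (V, E, d) a simple undirected graph with edge weights d : E → ℝ_{≥0}, with each edge given an arbitrary fixed orientation. There exists y : E × {1,…,K} → ℝ satisfying (i) ∑_{k ≤ K} y_{ijk}² = d_{ij}² for every edge {i,j} ∈ E, and (ii) for every cycle C in G with a closed-trail orientation W(C) and every k ≤ K, ∑_{(i,j) ∈ W(C)} (±y_{ijk}) = 0 (sign + if the edge is traversed in its fixed orientation, − otherwise), if and only if G admits a realization x : V → ℝ^K with ‖x_i − x_j‖₂ = d_{ij} for every edge {i,j} ∈ E. -/

import Mathlib

open SimpleGraph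

section aux
variable {V : Type*} {G : SimpleGraph V} {K : ℕ} (y : V → V → Fin K → ℝ)

noncomputable def dsum {u v : V} (w : G.Walk u v) (k : Fin K) : ℝ :=
  (w.darts.map (fun e => y e.fst e.snd k)).sum

@[simp] lemma dsum_nil {u : V} (k : Fin K) : dsum y (Walk.nil : G.Walk u u) k = 0 := by
  simp [dsum]

lemma dsum_append {u v w : V} (p : G.Walk u v) (q : G.Walk v w) (k : Fin K) :
    dsum y (p.append q) k = dsum y p k + dsum y q k := by
  simp [dsum, Walk.darts_append]

lemma dsum_cons {u v w : V} (h : G.Adj u v) (p : G.Walk v w) (k : Fin K) :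
    dsum y (Walk.cons h p) k = y u v k + dsum y p k := by
  simp [dsum]

lemma dsum_copy {u v u' v' : V} (p : G.Walk u v) (hu : u = u') (hv : v = v') (k : Fin K) :
    dsum y (p.copy hu hv) k = dsum y p k := by
  subst hu hv; rfl

lemma dsum_reverse (hy : ∀ i j : V, G.Adj i j → ∀ k : Fin K, y i j k = - y j i k)
    {u v : V} (p : G.Walk u v) (k : Fin K) :
    dsum y p.reverse k = - dsum y p k := by
  induction p with
  | nil => simp
  | cons h p ih =>
    rw [Walk.reverse_cons, dsum_append, dsum_cons, ih, dsum_cons, dsum_nil, hy _ _ h.symm]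
    ring

lemma dsum_rotate [DecidableEq V] {v u : V} (c : G.Walk v v) (h : u ∈ c.support) (k : Fin K) :
    dsum y (c.rotate u h) k = dsum y c k := by
  unfold dsum
  exact List.Perm.sum_eq (((c.rotate_darts u h).perm).map _)

lemma path_self_nil {a : V} (p : G.Walk a a) (hp : p.IsPath) : p = Walk.nil := by
  cases p with
  | nil => rfl
  | cons h q =>
    exfalso
    have := hp.support_nodup
    rw [Walk.support_cons] at this
    exact (List.nodup_cons.mp this).1 q.end_mem_support

lemma closed_dsum_zero [DecidableEq V]
    (hy : ∀ i j : V, G.Adj i j → ∀ k : Fin K, y i j k = - y j i k)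
    (hcyc : ∀ (a : V) (w : G.Walk a a), w.IsCycle → ∀ k : Fin K,
        (w.darts.map (fun e => y e.fst e.snd k)).sum = 0) :
    ∀ (n : ℕ) (a : V) (w : G.Walk a a), w.length ≤ n → ∀ k : Fin K, dsum y w k = 0 := by
  intro n
  induction n with
  | zero =>
    intro a w hw k
    cases w with
    | nil => simp
    | cons h p => simp [Walk.length_cons] at hw
  | succ n ih =>
    intro a w hw k
    by_cases hnd : w.support.tail.Nodup
    · cases w with
      | nil => simp
      | cons h p =>
        rename_i b
        have hp : p.IsPath := by
          rw [Walk.isPath_def]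
          simpa using hnd
        by_cases he : s(a, b) ∈ p.edges
        · cases p with
          | nil => exact absurd rfl h.ne
          | cons h2 q =>
            rename_i c
            rw [Walk.edges_cons, List.mem_cons] at he
            rcases he with he | he
            · have hca : c = a := by
                rcases Sym2.eq_iff.mp he with ⟨h1, h2'⟩ | ⟨h1, h2'⟩
                · exact absurd h1 h.ne
                · exact h1.symm
              subst hca
              have hq : q = Walk.nil := path_self_nil q hp.of_cons
              subst hq
              rw [dsum_cons, dsum_cons, hy _ _ h, dsum_nil]
              ring
            · exfalso
              have hb : b ∈ q.support := Walk.snd_mem_support_of_mem_edges q he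
              have := hp.support_nodup
              rw [Walk.support_cons] at this
              exact (List.nodup_cons.mp this).1 hb
        · exact hcyc a (Walk.cons h p) ((Walk.cons_isCycle_iff p h).mpr ⟨hp, he⟩) k
    · obtain ⟨v, hv⟩ : ∃ v, 2 ≤ w.support.tail.count v := by
        by_contra hcon
        push_neg at hcon
        exact hnd (List.nodup_iff_count_le_one.mpr fun v => by have := hcon v; omega)
      have hvs : v ∈ w.support :=
        List.mem_of_mem_tail (List.count_pos_iff.mp (by omega))
      have hsum := dsum_rotate y w hvs k
      have hcount : 2 ≤ (w.rotate v hvs).support.tail.count v := by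
        rw [((w.support_rotate v hvs).perm).count_eq]
        exact hv
      have hlen : (w.rotate v hvs).length = w.length := by
        have h1 := (w.rotate_darts v hvs).perm.length_eq
        rwa [Walk.length_darts, Walk.length_darts] at h1
      rw [← hsum]
      generalize hww : w.rotate v hvs = w' at hcount hlen ⊢
      cases w' with
      | nil => simp
      | cons h' p' =>
        rename_i c
        rw [Walk.support_cons, List.tail_cons] at hcount
        have hvp : v ∈ p'.support := List.count_pos_iff.mp (by omega)
        have hsplit := p'.take_spec hvp
        set q := p'.takeUntil v hvp with hqdef
        set r := p'.dropUntil v hvp with hrdef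
        have hq1 : q.support.count v = 1 := p'.count_support_takeUntil_eq_one hvp
        have hrcount : 1 ≤ r.support.tail.count v := by
          have hsupp : p'.support = q.support ++ r.support.tail := by
            rw [← hsplit]; exact Walk.support_append q r
          rw [hsupp, List.count_append, hq1] at hcount
          omega
        have hrlen : 1 ≤ r.length := by
          cases hr0 : r with
          | nil =>
            rw [hr0] at hrcount
            simp at hrcount
          | cons _ _ => simp [Walk.length_cons]
        have hql : q.length + r.length = p'.length := by
          have := congr_arg Walk.length hsplit
          rwa [Walk.length_append] at this
        have hpl : p'.length + 1 ≤ n + 1 := by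
          rw [← hlen] at hw
          simpa [Walk.length_cons] using hw
        have h1 : dsum y (Walk.cons h' q) k = 0 := by
          apply ih
          rw [Walk.length_cons]
          omega
        have h2 : dsum y r k = 0 := ih v r (by omega) k
        calc dsum y (Walk.cons h' p') k
            = dsum y (Walk.cons h' q) k + dsum y r k := by
              rw [dsum_cons, dsum_cons, ← hsplit, dsum_append]; ring
          _ = 0 := by rw [h1, h2]; ring

end aux

/-- For an edge-weighted graph `(G, d)` with `d ≥ 0`, there is an assignment
`y` on oriented edges (encoded as a skew-symmetric function on ordered adjacent pairs)
satisfying (i) `∑_k y_{ijk}² = d_{ij}²` on every edge and (ii) a vanishing signed sum along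
every cycle (cycle walk) in every coordinate, if and only if `G` admits a realization
`x : V → ℝ^K` with `‖x_i − x_j‖₂ = d_{ij}` on every edge. -/
theorem statement_12 {V : Type*} [Fintype V] (K : ℕ) (hK : 0 < K) (G : SimpleGraph V)
    (d : Sym2 V → ℝ) (hd : ∀ e ∈ G.edgeSet, 0 ≤ d e) :
    (∃ y : V → V → Fin K → ℝ,
      (∀ i j : V, G.Adj i j → ∀ k : Fin K, y i j k = - y j i k) ∧
      (∀ i j : V, G.Adj i j → ∑ k : Fin K, (y i j k) ^ 2 = (d s(i, j)) ^ 2) ∧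
      (∀ (a : V) (w : G.Walk a a), w.IsCycle → ∀ k : Fin K,
        (w.darts.map (fun e => y e.fst e.snd k)).sum = 0)) ↔
    (∃ x : V → Fin K → ℝ, ∀ i j : V, G.Adj i j →
      Real.sqrt (∑ k : Fin K, (x i k - x j k) ^ 2) = d s(i, j)) := by
  classical
  constructor
  · rintro ⟨y, hy1, hy2, hy3⟩
    have hclosed : ∀ (a : V) (w : G.Walk a a) (k : Fin K), dsum y w k = 0 :=
      fun a w k => closed_dsum_zero y hy1 hy3 w.length a w le_rfl k
    have hsame : ∀ (u v' : V) (p q : G.Walk u v') (k : Fin K), dsum y p k = dsum y q k := by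
      intro u v' p q k
      have := hclosed u (p.append q.reverse) k
      rw [dsum_append, dsum_reverse y hy1] at this
      linarith
    set root : V → V := fun v => (G.connectedComponentMk v).out with hroot
    have hreach : ∀ v : V, G.Reachable (root v) v := by
      intro v
      rw [← ConnectedComponent.eq (G := G)]
      exact Quot.out_eq _
    set wlk : (v : V) → G.Walk (root v) v := fun v => (hreach v).some with hwlk
    refine ⟨fun v k => dsum y (wlk v) k, ?_⟩
    intro i j hij
    have hrij : root j = root i := by
      show (G.connectedComponentMk j).out = (G.connectedComponentMk i).out
      rw [show G.connectedComponentMk j = G.connectedComponentMk i from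
        ConnectedComponent.eq.mpr hij.symm.reachable]
    have hdiff : ∀ k : Fin K, dsum y (wlk j) k - dsum y (wlk i) k = y i j k := by
      intro k
      have := hsame (root j) j (wlk j)
        (((wlk i).append (Walk.cons hij Walk.nil)).copy hrij.symm rfl) k
      rw [dsum_copy, dsum_append, dsum_cons, dsum_nil] at this
      linarith
    have hsq : ∑ k : Fin K, (dsum y (wlk i) k - dsum y (wlk j) k) ^ 2 = (d s(i, j)) ^ 2 := by
      rw [← hy2 i j hij]
      apply Finset.sum_congr rfl
      intro k _
      have h : dsum y (wlk i) k - dsum y (wlk j) k = -(y i j k) := by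
        have := hdiff k; linarith
      rw [h]; ring
    rw [hsq, Real.sqrt_sq (hd _ (G.mem_edgeSet.mpr hij))]
  · rintro ⟨x, hx⟩
    refine ⟨fun i j k => x i k - x j k, fun i j _ k => by ring, ?_, ?_⟩
    · intro i j hij
      have h1 := hx i j hij
      have h2 : (0:ℝ) ≤ ∑ k : Fin K, (x i k - x j k) ^ 2 :=
        Finset.sum_nonneg fun k _ => sq_nonneg _
      rw [← h1, Real.sq_sqrt h2]
    · intro a w _ k
      have key : ∀ (u v' : V) (p : G.Walk u v'),
          (p.darts.map (fun e => (fun i j (k : Fin K) => x i k - x j k) e.fst e.snd k)).sum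
            = x u k - x v' k := by
        intro u v' p
        induction p with
        | nil => simp
        | cons h p ih => simp [ih]
      rw [key]; ring
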